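/- Let S, P : ℝ → ℝ be a solution of the Type II model for t ≥ 0 with S(t) > 0 and P(t) > 0 for all t ≥ 0, and suppose P(t) → 0 as t → ∞. Then liminf_{t → ∞} S(t) ≥ v_c·K; combined with limsup_{t → ∞} S(t) ≤ v_c·K, this yields S(t) → v_c·K as t → ∞. -/

import Mathlib

open Filter Set

private lemma slope_pos_right {g : ℝ → ℝ} {s : ℝ} (hg : DifferentiableAt ℝ g s)
    (hd : 0 < deriv g s) : ∀ᶠ t in nhdsWithin s (Ioi s), g s < g t := by
  have h := hg.hasDerivAt
  rw [hasDerivAt_iff_tendsto_slope] at h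
  have h2 : Tendsto (slope g s) (nhdsWithin s (Ioi s)) (nhds (deriv g s)) :=
    h.mono_left (nhdsWithin_mono s (fun x hx => ne_of_gt hx))
  have h3 : ∀ᶠ t in nhdsWithin s (Ioi s), 0 < slope g s t :=
    h2.eventually (eventually_gt_nhds hd)
  filter_upwards [h3, self_mem_nhdsWithin] with t ht hts
  have hst : (0:ℝ) < t - s := sub_pos.2 hts
  have hslope : slope g s t = (g t - g s) / (t - s) := slope_def_field g s t
  rw [hslope] at ht
  have : 0 < g t - g s := by
    have := mul_pos ht hst
    rwa [div_mul_cancel₀ _ (ne_of_gt hst)] at this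
  linarith

private lemma stays_above {g : ℝ → ℝ} (hg : Differentiable ℝ g) {a t0 : ℝ}
    (h0 : a ≤ g t0)
    (hd : ∀ t, t0 ≤ t → g t = a → 0 < deriv g t) :
    ∀ t, t0 ≤ t → a ≤ g t := by
  by_contra hcon
  push_neg at hcon
  obtain ⟨t1, ht1, hlt⟩ := hcon
  set A : Set ℝ := Icc t0 t1 ∩ g ⁻¹' (Ici a) with hA
  have hclosed : IsClosed A := isClosed_Icc.inter (isClosed_Ici.preimage hg.continuous)
  have hne : A.Nonempty := ⟨t0, ⟨le_refl _, ht1⟩, h0⟩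
  have hbdd : BddAbove A := ⟨t1, fun x hx => hx.1.2⟩
  set s := sSup A with hs
  have hsA : s ∈ A := hclosed.csSup_mem hne hbdd
  obtain ⟨⟨hs1, hs2⟩, hs3⟩ := hsA
  have hga : a ≤ g s := hs3
  have hst1 : s < t1 := by
    rcases eq_or_lt_of_le hs2 with h | h
    · exfalso; rw [h] at hga; exact absurd hga (not_le.2 hlt)
    · exact h
  have hkey : ∀ t, s < t → t ≤ t1 → g t < a := by
    intro t hst htt1
    by_contra hge
    push_neg at hge
    exact absurd (le_csSup hbdd ⟨⟨hs1.trans hst.le, htt1⟩, hge⟩) (not_le.2 hst)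
  have hex : ∃ t, s < t ∧ t < t1 ∧ a < g t := by
    have hIoo : Ioo s t1 ∈ nhdsWithin s (Ioi s) := Ioo_mem_nhdsGT_of_mem ⟨le_refl s, hst1⟩
    rcases eq_or_lt_of_le hga with heq | hlt2
    · have hder := hd s hs1 heq.symm
      have h1 := slope_pos_right (hg s) hder
      obtain ⟨t, ht, hmem⟩ := (h1.and hIoo).exists
      exact ⟨t, hmem.1, hmem.2, heq ▸ ht⟩
    · have hcont : Tendsto g (nhds s) (nhds (g s)) := hg.continuous.continuousAt
      have h1 : ∀ᶠ t in nhds s, a < g t := hcont.eventually (eventually_gt_nhds hlt2)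
      have h2 : ∀ᶠ t in nhdsWithin s (Ioi s), a < g t :=
        eventually_nhdsWithin_of_eventually_nhds h1
      obtain ⟨t, ht, hmem⟩ := (h2.and hIoo).exists
      exact ⟨t, hmem.1, hmem.2, ht⟩
  obtain ⟨t, hst, htt1, hgt⟩ := hex
  exact absurd (hkey t hst htt1.le) (not_lt.2 hgt.le)

private lemma linear_growth {g : ℝ → ℝ} (hg : Differentiable ℝ g) {T c : ℝ}
    (h : ∀ t, T ≤ t → c ≤ deriv g t) :
    ∀ t, T ≤ t → g T + c * (t - T) ≤ g t := by
  intro t ht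
  have hf : Differentiable ℝ (fun t => g t - c * t) :=
    hg.sub (differentiable_id.const_mul c)
  have hderiv : ∀ x, deriv (fun t => g t - c * t) x = deriv g x - c := by
    intro x
    have h1 : HasDerivAt (fun t => g t - c * t) (deriv g x - c * 1) x :=
      ((hg x).hasDerivAt).sub ((hasDerivAt_id x).const_mul c)
    simpa using h1.deriv
  have hmono : MonotoneOn (fun t => g t - c * t) (Ici T) := by
    apply monotoneOn_of_deriv_nonneg (convex_Ici T) hf.continuous.continuousOn
      (hf.differentiableOn.mono interior_subset)
    intro x hx
    rw [interior_Ici] at hx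
    rw [hderiv]
    linarith [h x (le_of_lt hx)]
  have := hmono (self_mem_Ici) (mem_Ici.2 ht) ht
  simp only at this
  linarith

private lemma eventually_lower (μv βv Ep K vc : ℝ)
    (hμ : 0 < μv) (hβ : 0 < βv) (hE : 0 < Ep) (hK : 0 < K) (hv : 0 < vc)
    (S P : ℝ → ℝ) (hS : Differentiable ℝ S)
    (hS' : ∀ t ≥ (0:ℝ),
      deriv S t = vc * μv * S t * (1 - S t / (vc * K)) -
        βv * vc * S t * P t / (1 + βv * vc * Ep * S t))
    (hpos : ∀ t ≥ (0:ℝ), 0 < S t ∧ 0 < P t)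
    (hPlim : Tendsto P atTop (nhds 0))
    {ε : ℝ} (hε : 0 < ε) : ∀ᶠ t in atTop, vc * K - ε ≤ S t := by
  set a := vc * K - ε with ha_def
  by_cases ha : a ≤ 0
  · filter_upwards [eventually_ge_atTop (0:ℝ)] with t ht
    linarith [(hpos t ht).1]
  push_neg at ha
  set η := μv * ε / (2 * βv * vc * K) with hη_def
  have hη : 0 < η := by positivity
  have hPev : ∀ᶠ t in atTop, P t < η := hPlim.eventually (gt_mem_nhds hη)
  obtain ⟨T, hT⟩ := eventually_atTop.1 (hPev.and (eventually_ge_atTop (0:ℝ)))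
  set c₀ := μv * ε / (2 * K) with hc₀_def
  have hc₀ : 0 < c₀ := by positivity
  have key : ∀ t, T ≤ t → S t ≤ a → c₀ * S t ≤ deriv S t := by
    intro t ht hta
    obtain ⟨hPt, ht0⟩ := hT t ht
    obtain ⟨hSpos, hPpos⟩ := hpos t ht0
    rw [hS' t ht0]
    have hprod : 0 < βv * vc * Ep * S t := by positivity
    have hden : (1:ℝ) ≤ 1 + βv * vc * Ep * S t := by linarith
    have hnum : 0 ≤ βv * vc * S t * P t := by positivity
    have hQ : βv * vc * S t * P t / (1 + βv * vc * Ep * S t) ≤ βv * vc * S t * P t :=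
      div_le_self hnum hden
    have hQ2 : βv * vc * S t * P t ≤ βv * vc * S t * η := by nlinarith
    have hL : vc * μv * S t * (ε / (vc * K)) ≤ vc * μv * S t * (1 - S t / (vc * K)) := by
      apply mul_le_mul_of_nonneg_left _ (by positivity)
      have h1 : (1:ℝ) - S t / (vc * K) = (vc * K - S t) / (vc * K) := by field_simp
      rw [h1]
      gcongr
      linarith
    have heq : vc * μv * S t * (ε / (vc * K)) - βv * vc * S t * η = c₀ * S t := by
      rw [hη_def, hc₀_def]
      field_simp
      ring
    linarith
  by_cases hcase : ∃ t1, T ≤ t1 ∧ a ≤ S t1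
  · obtain ⟨t1, ht1T, ha1⟩ := hcase
    have hst := stays_above hS ha1 (fun t ht heq => by
      have hk := key t (ht1T.trans ht) (le_of_eq heq)
      rw [heq] at hk
      exact lt_of_lt_of_le (by positivity) hk)
    filter_upwards [eventually_ge_atTop t1] with t ht
    exact hst t ht
  · exfalso
    push_neg at hcase
    have hlt : ∀ t, T ≤ t → S t < a := fun t ht => hcase t ht
    have hmono : StrictMonoOn S (Ici T) := by
      apply strictMonoOn_of_deriv_pos (convex_Ici T) hS.continuous.continuousOn
      intro x hx
      rw [interior_Ici] at hx
      have hx' : T ≤ x := le_of_lt hx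
      have hkx := key x hx' (hlt x hx').le
      have hSx : 0 < S x := (hpos x (hT x hx').2).1
      exact lt_of_lt_of_le (by positivity) hkx
    have hST : 0 < S T := (hpos T (hT T le_rfl).2).1
    have hc : 0 < c₀ * S T := by positivity
    have hgr : ∀ t, T ≤ t → c₀ * S T ≤ deriv S t := by
      intro t ht
      have hSTt : S T ≤ S t := by
        rcases eq_or_lt_of_le ht with h | h
        · rw [h]
        · exact (hmono (self_mem_Ici) (mem_Ici.2 ht) h).le
      have := key t ht (hlt t ht).le
      nlinarith
    have hlin := linear_growth hS hgr
    have haST : 0 < a - S T := by linarith [hlt T le_rfl]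
    have hdivpos : 0 < (a - S T) / (c₀ * S T) := div_pos haST hc
    have ht2 : T ≤ T + (a - S T) / (c₀ * S T) + 1 := by linarith
    have h1 := hlin _ ht2
    have h2 : c₀ * S T * (T + (a - S T) / (c₀ * S T) + 1 - T) = (a - S T) + c₀ * S T := by
      field_simp
      ring
    have h3 := hlt _ ht2
    linarith

private lemma eventually_upper (μv βv Ep K vc : ℝ)
    (hμ : 0 < μv) (hβ : 0 < βv) (hE : 0 < Ep) (hK : 0 < K) (hv : 0 < vc)
    (S P : ℝ → ℝ) (hS : Differentiable ℝ S)
    (hS' : ∀ t ≥ (0:ℝ),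
      deriv S t = vc * μv * S t * (1 - S t / (vc * K)) -
        βv * vc * S t * P t / (1 + βv * vc * Ep * S t))
    (hpos : ∀ t ≥ (0:ℝ), 0 < S t ∧ 0 < P t)
    {ε : ℝ} (hε : 0 < ε) : ∀ᶠ t in atTop, S t ≤ vc * K + ε := by
  set b := vc * K + ε with hb_def
  have hb : 0 < b := by positivity
  set c' := μv * ε * b / K with hc'_def
  have hc' : 0 < c' := by positivity
  have key : ∀ t, (0:ℝ) ≤ t → b ≤ S t → deriv S t ≤ -c' := by
    intro t ht0 hbt
    obtain ⟨hSpos, hPpos⟩ := hpos t ht0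
    rw [hS' t ht0]
    have hprod : 0 < βv * vc * Ep * S t := by positivity
    have hden : (0:ℝ) < 1 + βv * vc * Ep * S t := by linarith
    have hQ : 0 ≤ βv * vc * S t * P t / (1 + βv * vc * Ep * S t) := by positivity
    have h2 : (1:ℝ) - S t / (vc * K) ≤ -ε / (vc * K) := by
      have h1 : (1:ℝ) - S t / (vc * K) = (vc * K - S t) / (vc * K) := by field_simp
      rw [h1]
      gcongr
      linarith
    have h3 : vc * μv * S t * (1 - S t / (vc * K)) ≤ vc * μv * S t * (-ε / (vc * K)) :=
      mul_le_mul_of_nonneg_left h2 (by positivity)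
    have h4 : vc * μv * S t * (-ε / (vc * K)) = -(μv * ε * S t / K) := by
      field_simp
    have h5 : μv * ε * b / K ≤ μv * ε * S t / K := by gcongr
    rw [hc'_def]
    linarith
  by_cases hcase : ∃ t1, (0:ℝ) ≤ t1 ∧ S t1 ≤ b
  · obtain ⟨t1, ht10, hb1⟩ := hcase
    have hst := stays_above (g := fun t => -S t) hS.neg (a := -b) (t0 := t1)
      (by simpa using hb1)
      (fun t ht heq => by
        have hSt : S t = b := by
          have : -S t = -b := heq
          linarith
        have hk := key t (ht10.trans ht) (le_of_eq hSt.symm)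
        rw [deriv.fun_neg]
        linarith)
    filter_upwards [eventually_ge_atTop t1] with t ht
    have := hst t ht
    simpa using this
  · exfalso
    push_neg at hcase
    have hgt : ∀ t, (0:ℝ) ≤ t → b < S t := fun t ht => hcase t ht
    have hgr : ∀ t, (0:ℝ) ≤ t → c' ≤ deriv (fun t => -S t) t := by
      intro t ht
      rw [deriv.fun_neg]
      have := key t ht (hgt t ht).le
      linarith
    have hlin := linear_growth hS.neg hgr
    have hS0 : 0 < S 0 := (hpos 0 le_rfl).1
    have ht3 : (0:ℝ) ≤ S 0 / c' := by positivity
    have h1 := hlin _ ht3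
    simp only [Pi.neg_apply] at h1
    have h2 : c' * (S 0 / c' - 0) = S 0 := by
      field_simp
      ring
    have h3 := hgt _ ht3
    linarith

/-- For a solution of the Type II model that stays positive for `t ≥ 0`
and whose pathogen density tends to `0`, one has `liminf_{t→∞} S(t) ≥ vc·K`, and
(combined with `limsup S ≤ vc·K`) `S(t) → vc·K` as `t → ∞`. -/
theorem typeII_S_liminf_and_limit (μv βv Ep K vc α δ : ℝ)
    (hμ : 0 < μv) (hβ : 0 < βv) (hE : 0 < Ep) (hK : 0 < K) (hv : 0 < vc)
    (hα : 0 < α) (hδ : 0 < δ)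
    (S P : ℝ → ℝ) (hS : Differentiable ℝ S) (hP : Differentiable ℝ P)
    (hS' : ∀ t ≥ (0:ℝ),
      deriv S t = vc * μv * S t * (1 - S t / (vc * K)) -
        βv * vc * S t * P t / (1 + βv * vc * Ep * S t))
    (hP' : ∀ t ≥ (0:ℝ),
      deriv P t = α * βv * vc * S t * P t / (1 + βv * vc * Ep * S t) - δ * P t)
    (hpos : ∀ t ≥ (0:ℝ), 0 < S t ∧ 0 < P t)
    (hPlim : Tendsto P atTop (nhds 0)) :
    vc * K ≤ liminf S atTop ∧ Tendsto S atTop (nhds (vc * K)) := by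
  have hT : Tendsto S atTop (nhds (vc * K)) := by
    rw [tendsto_order]
    constructor
    · intro x hx
      have hε : 0 < (vc * K - x) / 2 := by linarith
      filter_upwards [eventually_lower μv βv Ep K vc hμ hβ hE hK hv S P hS hS' hpos hPlim hε]
        with t ht
      linarith
    · intro x hx
      have hε : 0 < (x - vc * K) / 2 := by linarith
      filter_upwards [eventually_upper μv βv Ep K vc hμ hβ hE hK hv S P hS hS' hpos hε]
        with t ht
      linarith
  exact ⟨le_of_eq hT.liminf_eq.symm, hT⟩
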